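/- arXiv:1102.2805 — 3 statements merged into one kernel-verified Lean document; each statement's English description precedes it below -/
import Mathlib

section
/- For any real numbers a, b with a² + b² > 0, the integral ∫₀^∞ (1/(2π t)) exp( -|y - μ t|²/(2t) ) dt, where y = (a, b) ∈ ℝ² \ {0} and μ = (λ₁, -λ₂) with λ₁, λ₂ > 0, equals (1/π) exp(λ₁ a - λ₂ b) K₀( √((λ₁² + λ₂²)(a² + b²)) ), where K₀ is the modified Bessel function of the second kind of order 0. -/
open Real MeasureTheory

/-- Modified Bessel function of the second kind of integer index `n`,
via the standard integral representation `K_n(x) = ∫₀^∞ e^{-x cosh t} cosh(n t) dt`. -/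
noncomputable def besselK (n : ℕ) (x : ℝ) : ℝ :=
  ∫ t in Set.Ioi (0 : ℝ), Real.exp (-x * Real.cosh t) * Real.cosh (n * t)

lemma besselK_zero_eq (x : ℝ) :
    besselK 0 x = ∫ t in Set.Ioi (0 : ℝ), Real.exp (-x * Real.cosh t) := by
  unfold besselK
  simp

/-- Key change-of-variables identity: for `r, c > 0`,
`∫₀^∞ (1/(2t)) e^{-(r²/(2t) + c²t/2)} dt = ∫₀^∞ e^{-(c r) cosh u} du`. -/
lemma key_cov (r c : ℝ) (hr : 0 < r) (hc : 0 < c) :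
    (∫ t in Set.Ioi (0 : ℝ),
        (1 / (2 * t)) * Real.exp (-(r ^ 2 / (2 * t) + c ^ 2 * t / 2)))
      = ∫ u in Set.Ioi (0 : ℝ), Real.exp (-(c * r) * Real.cosh u) := by
  set α : ℝ := r / c with hα
  have hαpos : 0 < α := div_pos hr hc
  set f : ℝ → ℝ := fun u => α * Real.exp u with hf
  have himg : f '' Set.univ = Set.Ioi (0 : ℝ) := by
    rw [Set.image_univ]
    ext y
    constructor
    · rintro ⟨u, rfl⟩
      exact mul_pos hαpos (Real.exp_pos u)
    · intro hy
      refine ⟨Real.log (y / α), ?_⟩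
      rw [hf]
      simp only
      rw [Real.exp_log (div_pos hy hαpos)]
      field_simp
  have hderiv : ∀ u ∈ Set.univ, HasDerivWithinAt f (α * Real.exp u) Set.univ u := by
    intro u _
    exact ((Real.hasDerivAt_exp u).const_mul α).hasDerivWithinAt
  have hinj : Set.InjOn f Set.univ := by
    intro u _ v _ h
    have := mul_left_cancel₀ (ne_of_gt hαpos) h
    exact Real.exp_injective this
  have hcov := integral_image_eq_integral_abs_deriv_smul MeasurableSet.univ hderiv hinj
    (fun t => (1 / (2 * t)) * Real.exp (-(r ^ 2 / (2 * t) + c ^ 2 * t / 2)))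
  rw [himg] at hcov
  rw [hcov]
  have heq : ∀ u : ℝ,
      |α * Real.exp u| • ((1 / (2 * (f u))) *
        Real.exp (-(r ^ 2 / (2 * (f u)) + c ^ 2 * (f u) / 2)))
      = (1 / 2) * Real.exp (-(c * r) * Real.cosh |u|) := by
    intro u
    have hfu : f u = α * Real.exp u := rfl
    have hfupos : 0 < α * Real.exp u := mul_pos hαpos (Real.exp_pos u)
    rw [hfu, abs_of_pos hfupos, smul_eq_mul, Real.cosh_abs, Real.cosh_eq]
    have h1 : r ^ 2 / (2 * (α * Real.exp u)) + c ^ 2 * (α * Real.exp u) / 2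
        = c * r * ((Real.exp u + Real.exp (-u)) / 2) := by
      rw [hα, Real.exp_neg]
      have := Real.exp_pos u
      field_simp
      ring
    rw [h1]
    have h2 : α * Real.exp u * (1 / (2 * (α * Real.exp u))) = 1 / 2 := by
      field_simp
    rw [← mul_assoc, h2]
    ring_nf
  simp only [Measure.restrict_univ]
  rw [show (fun u => |α * Real.exp u| • ((1 / (2 * (f u))) *
        Real.exp (-(r ^ 2 / (2 * (f u)) + c ^ 2 * (f u) / 2))))
      = (fun u => (1 / 2) * Real.exp (-(c * r) * Real.cosh |u|)) from funext heq]
  rw [integral_comp_abs (f := fun u => (1 / 2) * Real.exp (-(c * r) * Real.cosh u))]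
  rw [← integral_const_mul]
  congr 1
  ext u
  ring

/-- The Green's function of planar Brownian motion with drift μ = (λ₁, -λ₂):
∫₀^∞ (1/(2πt)) e^{-|y-μt|²/(2t)} dt = (1/π) e^{λ₁a - λ₂b} K₀(√((λ₁²+λ₂²)(a²+b²))). -/
theorem stmt3 (l1 l2 : ℝ) (hl1 : 0 < l1) (hl2 : 0 < l2)
    (a b : ℝ) (hab : 0 < a ^ 2 + b ^ 2) :
    (∫ t in Set.Ioi (0 : ℝ),
        (1 / (2 * Real.pi * t)) *
          Real.exp (-(((a - l1 * t) ^ 2 + (b - (-l2) * t) ^ 2) / (2 * t))))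
      = (1 / Real.pi) * Real.exp (l1 * a - l2 * b) *
          besselK 0 (Real.sqrt ((l1 ^ 2 + l2 ^ 2) * (a ^ 2 + b ^ 2))) := by
  set r : ℝ := Real.sqrt (a ^ 2 + b ^ 2) with hrdef
  set c : ℝ := Real.sqrt (l1 ^ 2 + l2 ^ 2) with hcdef
  have hr : 0 < r := Real.sqrt_pos.2 hab
  have hc2 : (0:ℝ) < l1 ^ 2 + l2 ^ 2 := by positivity
  have hc : 0 < c := Real.sqrt_pos.2 hc2
  have hr2 : r ^ 2 = a ^ 2 + b ^ 2 := Real.sq_sqrt hab.le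
  have hcsq : c ^ 2 = l1 ^ 2 + l2 ^ 2 := Real.sq_sqrt hc2.le
  have hx : Real.sqrt ((l1 ^ 2 + l2 ^ 2) * (a ^ 2 + b ^ 2)) = c * r := by
    rw [hcdef, hrdef, Real.sqrt_mul hc2.le]
  -- pointwise rewriting of the integrand on Ioi 0
  have hpt : ∀ t ∈ Set.Ioi (0:ℝ),
      (1 / (2 * Real.pi * t)) *
          Real.exp (-(((a - l1 * t) ^ 2 + (b - (-l2) * t) ^ 2) / (2 * t)))
      = (1 / Real.pi) * Real.exp (l1 * a - l2 * b) *
          ((1 / (2 * t)) * Real.exp (-(r ^ 2 / (2 * t) + c ^ 2 * t / 2))) := by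
    intro t ht
    have ht' : (0:ℝ) < t := ht
    have harg : -(((a - l1 * t) ^ 2 + (b - (-l2) * t) ^ 2) / (2 * t))
        = (l1 * a - l2 * b) + -(r ^ 2 / (2 * t) + c ^ 2 * t / 2) := by
      rw [hr2, hcsq]
      field_simp
      ring
    rw [harg, Real.exp_add]
    have hπ : Real.pi ≠ 0 := Real.pi_ne_zero
    field_simp
  rw [setIntegral_congr_fun measurableSet_Ioi hpt]
  rw [integral_const_mul]
  rw [hx, besselK_zero_eq, key_cov r c hr hc]
end

section
/- Let λ₁, λ₂ > 0 and ε > 0. Then (1/ε)·log[ (2 + 2ελ₁ + ε²(λ₁² + λ₂²) - √(ε²(λ₁² + λ₂²)(ε²λ₂² + (2 + ελ₁)²))) / (2 + 2ελ₁) ] converges to -√(λ₁² + λ₂²) as ε → 0⁺. -/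
open Real Filter

/-- (1/ε)·log[(2 + 2ελ₁ + ε²(λ₁²+λ₂²) - √(ε²(λ₁²+λ₂²)(ε²λ₂² + (2+ελ₁)²)))/(2 + 2ελ₁)]
→ -√(λ₁²+λ₂²) as ε → 0⁺. -/
theorem stmt5 (l1 l2 : ℝ) (hl1 : 0 < l1) (hl2 : 0 < l2) :
    Tendsto (fun ε : ℝ =>
        (1 / ε) * Real.log ((2 + 2 * ε * l1 + ε ^ 2 * (l1 ^ 2 + l2 ^ 2)
            - Real.sqrt (ε ^ 2 * (l1 ^ 2 + l2 ^ 2) * (ε ^ 2 * l2 ^ 2 + (2 + ε * l1) ^ 2)))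
          / (2 + 2 * ε * l1)))
      (nhdsWithin 0 (Set.Ioi 0)) (nhds (-Real.sqrt (l1 ^ 2 + l2 ^ 2))) := by
  set L := Real.sqrt (l1 ^ 2 + l2 ^ 2) with hLdef
  have hLpos : 0 < L := Real.sqrt_pos.2 (by positivity)
  set h : ℝ → ℝ := fun ε =>
    (ε * (l1 ^ 2 + l2 ^ 2) - L * Real.sqrt (ε ^ 2 * l2 ^ 2 + (2 + ε * l1) ^ 2))
      / (2 + 2 * ε * l1) with hhdef
  have h0 : h 0 = -L := by
    have : Real.sqrt ((0:ℝ) ^ 2 * l2 ^ 2 + (2 + 0 * l1) ^ 2) = 2 := by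
      norm_num
    simp [hhdef, this]
    ring
  have hcont : ContinuousAt h 0 := by
    apply ContinuousAt.div
    · fun_prop
    · fun_prop
    · norm_num
  have htend : Tendsto h (nhdsWithin 0 (Set.Ioi 0)) (nhds (-L)) := by
    have := hcont.continuousWithinAt (s := Set.Ioi 0)
    rw [ContinuousWithinAt, h0] at this
    exact this
  have hneg : ∀ᶠ ε in nhdsWithin 0 (Set.Ioi 0), h ε < 0 :=
    htend.eventually (eventually_lt_nhds (by linarith : -L < 0)) |>.mono (fun ε hε => hε)
  have hth : Tendsto (fun ε => ε * h ε) (nhdsWithin 0 (Set.Ioi 0))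
      (nhdsWithin 0 {(0:ℝ)}ᶜ) := by
    apply tendsto_nhdsWithin_of_tendsto_nhds_of_eventually_within
    · have : Tendsto (fun ε : ℝ => ε * h ε) (nhdsWithin 0 (Set.Ioi 0)) (nhds (0 * -L)) :=
        (tendsto_nhdsWithin_iff.1 tendsto_id |>.1).mul htend
      simpa using this
    · filter_upwards [hneg, self_mem_nhdsWithin] with ε hε hε'
      exact (mul_neg_of_pos_of_neg hε' hε).ne
  have hlog : Tendsto (fun t : ℝ => Real.log (1 + t) / t) (nhdsWithin 0 {(0:ℝ)}ᶜ)
      (nhds 1) := by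
    have H : HasDerivAt (fun t : ℝ => Real.log (1 + t)) 1 0 := by
      have h1 : HasDerivAt (fun t : ℝ => 1 + t) 1 0 := (hasDerivAt_id (0:ℝ)).const_add 1
      have := (Real.hasDerivAt_log (x := 1 + 0) (by norm_num)).comp 0 h1
      simpa [Function.comp_def] using this
    have H2 := hasDerivAt_iff_tendsto_slope.1 H
    refine H2.congr (fun t => ?_)
    simp [slope_def_field, div_eq_inv_mul]
  have key : Tendsto (fun ε => Real.log (1 + ε * h ε) / (ε * h ε) * h ε)
      (nhdsWithin 0 (Set.Ioi 0)) (nhds (1 * -L)) := (hlog.comp hth).mul htend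
  rw [show (1:ℝ) * -L = -L by ring] at key
  refine key.congr' ?_
  filter_upwards [hneg, self_mem_nhdsWithin] with ε hε hεpos
  have hεpos' : (0:ℝ) < ε := hεpos
  have hden : (0:ℝ) < 2 + 2 * ε * l1 := by nlinarith
  have hsqrt : Real.sqrt (ε ^ 2 * (l1 ^ 2 + l2 ^ 2) * (ε ^ 2 * l2 ^ 2 + (2 + ε * l1) ^ 2))
      = ε * L * Real.sqrt (ε ^ 2 * l2 ^ 2 + (2 + ε * l1) ^ 2) := by
    rw [Real.sqrt_mul (by positivity), Real.sqrt_mul (by positivity), Real.sqrt_sq hεpos'.le]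
  have hexpr : (2 + 2 * ε * l1 + ε ^ 2 * (l1 ^ 2 + l2 ^ 2)
      - Real.sqrt (ε ^ 2 * (l1 ^ 2 + l2 ^ 2) * (ε ^ 2 * l2 ^ 2 + (2 + ε * l1) ^ 2)))
      / (2 + 2 * ε * l1) = 1 + ε * h ε := by
    rw [hsqrt, hhdef]
    field_simp
    ring
  have hhne : h ε ≠ 0 := hε.ne
  rw [hexpr]
  field_simp
end

section
/- Let P(z,w) = 4 + t⁴ - t²(w + w⁻¹) - t²(z + z⁻¹) with t > 0. Then P has no zeros on the unit torus {|z| = |w| = 1} if and only if t ≠ √2; at t = √2 the only zero on the unit torus is z = w = 1. -/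
lemma aux_add_inv (z : ℂ) (h : ‖z‖ = 1) : z + z⁻¹ = ((2 * z.re : ℝ) : ℂ) := by
  rw [Complex.inv_def, Complex.normSq_eq_norm_sq, h]
  simp [Complex.add_conj]

lemma aux_re_le (z : ℂ) (h : ‖z‖ = 1) : z.re ≤ 1 :=
  le_trans (le_abs_self _) (h ▸ Complex.abs_re_le_norm z)

lemma aux_eq_one (z : ℂ) (h : ‖z‖ = 1) (hr : z.re = 1) : z = 1 := by
  have h2 : z.re ^ 2 + z.im ^ 2 = 1 := by
    have := Complex.sq_norm z
    rw [h] at this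
    rw [Complex.normSq_apply] at this
    nlinarith
  have : z.im = 0 := by nlinarith
  exact Complex.ext hr this

lemma aux_expr (t : ℝ) (z w : ℂ) (hz : ‖z‖ = 1) (hw : ‖w‖ = 1) :
    4 + (t : ℂ) ^ 4 - (t : ℂ) ^ 2 * (w + w⁻¹) - (t : ℂ) ^ 2 * (z + z⁻¹)
      = ((4 + t ^ 4 - t ^ 2 * (2 * w.re) - t ^ 2 * (2 * z.re) : ℝ) : ℂ) := by
  rw [aux_add_inv z hz, aux_add_inv w hw]; push_cast; ring

/-- P(z,w) = 4 + t⁴ - t²(w+w⁻¹) - t²(z+z⁻¹) has no zeros on the unit torus iff t ≠ √2,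
and at t = √2 the only zero on the unit torus is z = w = 1. -/
theorem stmt18 (t : ℝ) (ht : 0 < t) :
    ((∀ z w : ℂ, ‖z‖ = 1 → ‖w‖ = 1 →
        4 + (t : ℂ) ^ 4 - (t : ℂ) ^ 2 * (w + w⁻¹) - (t : ℂ) ^ 2 * (z + z⁻¹) ≠ 0)
      ↔ t ≠ Real.sqrt 2)
    ∧ (t = Real.sqrt 2 → ∀ z w : ℂ, ‖z‖ = 1 → ‖w‖ = 1 →
        (4 + (t : ℂ) ^ 4 - (t : ℂ) ^ 2 * (w + w⁻¹) - (t : ℂ) ^ 2 * (z + z⁻¹) = 0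
          ↔ z = 1 ∧ w = 1)) := by
  have hs2 : Real.sqrt 2 ^ 2 = 2 := Real.sq_sqrt (by norm_num)
  constructor
  · constructor
    · intro H ht2
      subst ht2
      have := H 1 1 (by simp) (by simp)
      apply this
      rw [aux_expr _ _ _ (by simp) (by simp)]
      simp only [Complex.ofReal_eq_zero, Complex.one_re]
      nlinarith
    · intro hne z w hz hw
      rw [aux_expr t z w hz hw]
      simp only [ne_eq, Complex.ofReal_eq_zero]
      intro h0
      have hz1 := aux_re_le z hz
      have hw1 := aux_re_le w hw
      have ht2 : t ^ 2 ≠ 2 := by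
        intro h
        exact hne (by nlinarith [Real.sqrt_nonneg 2])
      nlinarith [sq_nonneg (t ^ 2 - 2), sq_pos_of_ne_zero (sub_ne_zero.mpr ht2)]
  · intro ht2 z w hz hw
    subst ht2
    rw [aux_expr _ z w hz hw]
    simp only [Complex.ofReal_eq_zero]
    have hz1 := aux_re_le z hz
    have hw1 := aux_re_le w hw
    have h4 : Real.sqrt 2 ^ 4 = 4 := by nlinarith
    constructor
    · intro h0
      have hzre : z.re = 1 := by nlinarith
      have hwre : w.re = 1 := by nlinarith
      exact ⟨aux_eq_one z hz hzre, aux_eq_one w hw hwre⟩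
    · rintro ⟨rfl, rfl⟩
      simp only [Complex.one_re]
      nlinarith
end
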